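/- Every element of Heis₃(ℚ) can be written (a/c, b/c) where a, b, c ∈ ℤ[i] generate the unit ideal of ℤ[i], c ≠ 0 and 2 Re(a·conj(c)) = |b|²; moreover this representation is unique up to multiplication of a, b and c by a common unit u ∈ {1, −1, i, −i}. -/

import Mathlib

open MeasureTheory Filter

/-- Membership in the Heisenberg group
`Heis₃ = {(w₀,w) ∈ ℂ × ℂ : 2 Re w₀ = |w|²}`. -/
def InHeis (x : ℂ × ℂ) : Prop := 2 * x.1.re = ‖x.2‖ ^ 2

/-- The group law of `Heis₃`: the left translation of `x` by `g`, namely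
`(g₀,g)·(x₀,x) = (g₀ + x₀ + x·conj(g), g + x)`. -/
noncomputable def heisMul (g x : ℂ × ℂ) : ℂ × ℂ :=
  (g.1 + x.1 + x.2 * (starRingEnd ℂ) g.2, g.2 + x.2)

/-- Membership in `Heis₃(ℤ)`: the components lie in `ℤ[i]`. -/
def InHeisZ (g : ℂ × ℂ) : Prop :=
  InHeis g ∧ (∃ a : GaussianInt, g.1 = GaussianInt.toComplex a) ∧
    ∃ b : GaussianInt, g.2 = GaussianInt.toComplex b

/-- `(a, b, c)` is an admissible coprime integral representation of the rational point
`x = (a/c, b/c)` of `Heis₃(ℚ)`: here `a, b, c ∈ ℤ[i]` generate the unit ideal of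
`ℤ[i]`, `c ≠ 0` and `2 Re(a·conj c) = |b|²`. Such a representation is unique up to
multiplication of `a, b, c` by a common unit of `ℤ[i]`; the height of `x` is
`H(x) = |c|`. -/
def HeisRatRep (x : ℂ × ℂ) (a b c : GaussianInt) : Prop :=
  (∃ u v w : GaussianInt, u * a + v * b + w * c = 1) ∧ c ≠ 0 ∧
    x.1 = GaussianInt.toComplex a / GaussianInt.toComplex c ∧
    x.2 = GaussianInt.toComplex b / GaussianInt.toComplex c ∧
    2 * (GaussianInt.toComplex a * (starRingEnd ℂ) (GaussianInt.toComplex c)).re =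
      ‖GaussianInt.toComplex b‖ ^ 2

/-- The Haar measure of `Heis₃`, as a measure on `ℂ × ℂ`: the image of
`(1/2)·(Lebesgue measure on ℝ³)` under `(x,y,t) ↦ ((x²+y²)/2 + it/2, x+iy)`. -/
noncomputable def haarHeis : Measure (ℂ × ℂ) :=
  Measure.map
    (fun p : ℝ × ℝ × ℝ =>
      ((((p.1 ^ 2 + p.2.1 ^ 2) / 2 : ℝ) : ℂ) + ((p.2.2 / 2 : ℝ) : ℂ) * Complex.I,
        ((p.1 : ℝ) : ℂ) + ((p.2.1 : ℝ) : ℂ) * Complex.I))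
    ((1 / 2 : ENNReal) • volume)

/-- The Riemann zeta value `ζ(3)`. -/
noncomputable def zetaThree : ℝ := ∑' n : ℕ, 1 / ((n : ℝ) + 1) ^ 3

/-- The Dedekind zeta value `ζ_{ℚ(i)}(3) = (1/4)·Σ_{z ∈ ℤ[i], z ≠ 0} |z|⁻⁶`. -/
noncomputable def zetaQi3 : ℝ :=
  (1 / 4) * ∑' w : {w : GaussianInt // w ≠ 0}, 1 / ‖GaussianInt.toComplex w.1‖ ^ 6

/-- `x ∈ Heis₃(ℚ)`: `x ∈ Heis₃` and both coordinates are Gaussian rationals. -/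
def InHeisQ (x : ℂ × ℂ) : Prop :=
  InHeis x ∧
    (∃ p q : GaussianInt, q ≠ 0 ∧ x.1 = GaussianInt.toComplex p / GaussianInt.toComplex q) ∧
    ∃ p q : GaussianInt, q ≠ 0 ∧ x.2 = GaussianInt.toComplex p / GaussianInt.toComplex q

open GaussianInt

lemma heis_re_key {A B C : ℂ} (hC : C ≠ 0) (h : 2 * (A/C).re = ‖B/C‖ ^2) :
    2 * (A * (starRingEnd ℂ) C).re = ‖B‖ ^ 2 := by
  have hn : Complex.normSq C ≠ 0 := fun h0 => hC (Complex.normSq_eq_zero.1 h0)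
  rw [norm_div, div_pow, Complex.sq_norm, Complex.sq_norm, Complex.div_re] at h
  rw [Complex.sq_norm, Complex.mul_re, Complex.conj_re, Complex.conj_im]
  field_simp at h
  nlinarith [h]

lemma heis_exists (x : ℂ × ℂ)
    (h1 : ∃ p q : GaussianInt, q ≠ 0 ∧ x.1 = toComplex p / toComplex q)
    (h2 : ∃ p q : GaussianInt, q ≠ 0 ∧ x.2 = toComplex p / toComplex q) :
    ∃ a b c : GaussianInt, (∃ u v w : GaussianInt, u * a + v * b + w * c = 1) ∧ c ≠ 0 ∧
      x.1 = toComplex a / toComplex c ∧ x.2 = toComplex b / toComplex c := by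
  obtain ⟨p₁, q₁, hq₁, e₁⟩ := h1
  obtain ⟨p₂, q₂, hq₂, e₂⟩ := h2
  set a₀ := p₁ * q₂
  set b₀ := p₂ * q₁
  set c₀ := q₁ * q₂ with hc₀
  have hc₀ne : c₀ ≠ 0 := mul_ne_zero hq₁ hq₂
  set g := EuclideanDomain.gcd (EuclideanDomain.gcd a₀ b₀) c₀ with hg
  have hgc : g ∣ c₀ := EuclideanDomain.gcd_dvd_right _ _
  have hga : g ∣ a₀ := (EuclideanDomain.gcd_dvd_left _ _).trans (EuclideanDomain.gcd_dvd_left _ _)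
  have hgb : g ∣ b₀ := (EuclideanDomain.gcd_dvd_left _ _).trans (EuclideanDomain.gcd_dvd_right _ _)
  have hgne : g ≠ 0 := fun h0 => hc₀ne ((EuclideanDomain.gcd_eq_zero_iff.1 h0).2)
  obtain ⟨a, ha⟩ := hga
  obtain ⟨b, hb⟩ := hgb
  obtain ⟨c, hc⟩ := hgc
  have hcne : c ≠ 0 := fun h0 => hc₀ne (by simp [hc, h0])
  refine ⟨a, b, c, ?_, hcne, ?_, ?_⟩
  · -- Bezout
    have h1 : EuclideanDomain.gcd a₀ b₀ =
        a₀ * EuclideanDomain.gcdA a₀ b₀ + b₀ * EuclideanDomain.gcdB a₀ b₀ :=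
      EuclideanDomain.gcd_eq_gcd_ab a₀ b₀
    have h2 : g = (EuclideanDomain.gcd a₀ b₀) * EuclideanDomain.gcdA (EuclideanDomain.gcd a₀ b₀) c₀
        + c₀ * EuclideanDomain.gcdB (EuclideanDomain.gcd a₀ b₀) c₀ :=
      EuclideanDomain.gcd_eq_gcd_ab _ _
    set α := EuclideanDomain.gcdA (EuclideanDomain.gcd a₀ b₀) c₀
    set β := EuclideanDomain.gcdB (EuclideanDomain.gcd a₀ b₀) c₀
    set γ := EuclideanDomain.gcdA a₀ b₀
    set δ := EuclideanDomain.gcdB a₀ b₀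
    refine ⟨γ * α, δ * α, β, ?_⟩
    have : g * (γ * α * a + δ * α * b + β * c) = g * 1 := by
      rw [mul_one]
      calc g * (γ * α * a + δ * α * b + β * c)
          = (g * a * γ + g * b * δ) * α + (g * c) * β := by ring
        _ = (a₀ * γ + b₀ * δ) * α + c₀ * β := by rw [← ha, ← hb, ← hc]
        _ = g := by rw [← h1, h2]
    exact mul_left_cancel₀ hgne this
  · have hgC : (toComplex g : ℂ) ≠ 0 := fun h0 => hgne (toComplex_eq_zero.1 h0)
    have hq₂C : (toComplex q₂ : ℂ) ≠ 0 := fun h0 => hq₂ (toComplex_eq_zero.1 h0)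
    have hq₁C : (toComplex q₁ : ℂ) ≠ 0 := fun h0 => hq₁ (toComplex_eq_zero.1 h0)
    have key : p₁ * c = a * q₁ := by
      apply mul_right_cancel₀ (mul_ne_zero hgne hq₂)
      calc p₁ * c * (g * q₂) = (g * c) * (p₁ * q₂) := by ring
        _ = (q₁ * q₂) * (g * a) := by rw [← hc, ← ha]
        _ = a * q₁ * (g * q₂) := by ring
    have keyC := congrArg toComplex key
    rw [toComplex_mul, toComplex_mul] at keyC
    rw [e₁, div_eq_div_iff hq₁C (fun h0 => hcne (toComplex_eq_zero.1 h0))]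
    linear_combination keyC
  · have hgC : (toComplex g : ℂ) ≠ 0 := fun h0 => hgne (toComplex_eq_zero.1 h0)
    have hq₂C : (toComplex q₂ : ℂ) ≠ 0 := fun h0 => hq₂ (toComplex_eq_zero.1 h0)
    have hq₁C : (toComplex q₁ : ℂ) ≠ 0 := fun h0 => hq₁ (toComplex_eq_zero.1 h0)
    have key : p₂ * c = b * q₂ := by
      apply mul_right_cancel₀ (mul_ne_zero hgne hq₁)
      calc p₂ * c * (g * q₁) = (g * c) * (p₂ * q₁) := by ring
        _ = (q₁ * q₂) * (g * b) := by rw [← hc, ← hb]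
        _ = b * q₂ * (g * q₁) := by ring
    have keyC := congrArg toComplex key
    rw [toComplex_mul, toComplex_mul] at keyC
    rw [e₂, div_eq_div_iff hq₂C (fun h0 => hcne (toComplex_eq_zero.1 h0))]
    linear_combination keyC

/-- Every element of `Heis₃(ℚ)` can be written `(a/c, b/c)` with `a, b, c ∈ ℤ[i]`
generating the unit ideal, `c ≠ 0` and `2 Re(a·conj c) = |b|²`; moreover this
representation is unique up to multiplication of `a`, `b`, `c` by a common unit
`u ∈ {1, −1, i, −i}` of `ℤ[i]`. -/
theorem heisenberg_rational_coprime_representation (x : ℂ × ℂ) (hx : InHeisQ x) :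
    ∃ a b c : GaussianInt, HeisRatRep x a b c ∧
      ∀ a' b' c' : GaussianInt, HeisRatRep x a' b' c' →
        ∃ u : GaussianInt, IsUnit u ∧ a' = u * a ∧ b' = u * b ∧ c' = u * c := by
  obtain ⟨hheis, h1, h2⟩ := hx
  obtain ⟨a, b, c, hbez, hc, e1, e2⟩ := heis_exists x h1 h2
  have hre : 2 * (GaussianInt.toComplex a * (starRingEnd ℂ) (GaussianInt.toComplex c)).re =
      ‖GaussianInt.toComplex b‖ ^ 2 := by
    have hcC : (GaussianInt.toComplex c : ℂ) ≠ 0 :=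
      fun h0 => hc (GaussianInt.toComplex_eq_zero.1 h0)
    apply heis_re_key hcC
    rw [← e1, ← e2]; exact hheis
  refine ⟨a, b, c, ⟨hbez, hc, e1, e2, hre⟩, ?_⟩
  rintro a' b' c' ⟨hbez', hc', e1', e2', -⟩
  have hcC : (GaussianInt.toComplex c : ℂ) ≠ 0 :=
    fun h0 => hc (GaussianInt.toComplex_eq_zero.1 h0)
  have hc'C : (GaussianInt.toComplex c' : ℂ) ≠ 0 :=
    fun h0 => hc' (GaussianInt.toComplex_eq_zero.1 h0)
  -- cross-multiplication identities
  have hA : a * c' = a' * c := by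
    have := e1.symm.trans e1'
    rw [div_eq_div_iff hcC hc'C] at this
    rw [← GaussianInt.toComplex_inj]
    push_cast [GaussianInt.toComplex_mul]
    linear_combination this
  have hB : b * c' = b' * c := by
    have := e2.symm.trans e2'
    rw [div_eq_div_iff hcC hc'C] at this
    rw [← GaussianInt.toComplex_inj]
    push_cast [GaussianInt.toComplex_mul]
    linear_combination this
  obtain ⟨u₁, v₁, w₁, hB1⟩ := hbez
  obtain ⟨u₂, v₂, w₂, hB2⟩ := hbez'
  have hdvd1 : c ∣ c' := by
    refine ⟨u₁ * a' + v₁ * b' + w₁ * c', ?_⟩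
    have : c' * (u₁ * a + v₁ * b + w₁ * c) = c * (u₁ * a' + v₁ * b' + w₁ * c') := by
      have h1 : c' * (u₁ * a) = u₁ * (a * c') := by ring
      calc c' * (u₁ * a + v₁ * b + w₁ * c)
          = u₁ * (a * c') + v₁ * (b * c') + w₁ * (c * c') := by ring
        _ = u₁ * (a' * c) + v₁ * (b' * c) + w₁ * (c * c') := by rw [hA, hB]
        _ = c * (u₁ * a' + v₁ * b' + w₁ * c') := by ring
    simpa [hB1] using this
  have hdvd2 : c' ∣ c := by
    refine ⟨u₂ * a + v₂ * b + w₂ * c, ?_⟩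
    have : c * (u₂ * a' + v₂ * b' + w₂ * c') = c' * (u₂ * a + v₂ * b + w₂ * c) := by
      calc c * (u₂ * a' + v₂ * b' + w₂ * c')
          = u₂ * (a' * c) + v₂ * (b' * c) + w₂ * (c' * c) := by ring
        _ = u₂ * (a * c') + v₂ * (b * c') + w₂ * (c' * c) := by rw [hA, hB]
        _ = c' * (u₂ * a + v₂ * b + w₂ * c) := by ring
    simpa [hB2] using this
  obtain ⟨u, hu⟩ := associated_of_dvd_dvd hdvd1 hdvd2
  refine ⟨(u : GaussianInt), u.isUnit, ?_, ?_, ?_⟩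
  · apply mul_right_cancel₀ hc
    calc a' * c = a * c' := hA.symm
      _ = a * (c * u) := by rw [hu]
      _ = ↑u * a * c := by ring
  · apply mul_right_cancel₀ hc
    calc b' * c = b * c' := hB.symm
      _ = b * (c * u) := by rw [hu]
      _ = ↑u * b * c := by ring
  · rw [← hu]; ring
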